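/- Let F be a nonsingular unsatisfiable hitting clause-set containing an fs-pair {E ∪ {x}, E ∪ {−x}} ⊆ F with E ∉ F, and let F' := (F ∖ {E ∪ {x}, E ∪ {−x}}) ∪ {E}. Then F' is an unsatisfiable hitting clause-set, and every singular DP-sequence from F' that ends in a nonsingular clause-set has length at most 3. -/

import Mathlib

/-- A clause-set: a finite set of finite sets of integers. -/
abbrev Cls := Finset (Finset ℤ)

/-- A clause: a finite set of nonzero integers, clash-free. -/
def IsClause (C : Finset ℤ) : Prop := (0 : ℤ) ∉ C ∧ ∀ x ∈ C, -x ∉ C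

/-- All members are clauses. -/
def IsClauseSet (F : Cls) : Prop := ∀ C ∈ F, IsClause C

/-- Satisfiability: some clause (partial assignment) meets every clause of `F`. -/
def Sat (F : Cls) : Prop := ∃ S : Finset ℤ, IsClause S ∧ ∀ D ∈ F, (S ∩ D).Nonempty

/-- Hitting: any two distinct clauses clash. -/
def Hitting (F : Cls) : Prop := ∀ C ∈ F, ∀ D ∈ F, C ≠ D → ∃ x ∈ C, -x ∈ D

/-- Unsatisfiable hitting clause-set. -/
def UHit (F : Cls) : Prop := IsClauseSet F ∧ Hitting F ∧ ¬ Sat F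

/-- The variables of a clause-set (as absolute values of its literals). -/
def cvar (F : Cls) : Finset ℤ := F.sup (fun C => C.image (fun x => |x|))

/-- Number of variables. -/
def nvar (F : Cls) : ℕ := (cvar F).card

/-- Deficiency: number of clauses minus number of variables. -/
def deficiency (F : Cls) : ℤ := (F.card : ℤ) - (nvar F : ℤ)

/-- Literal degree. -/
def ldeg (F : Cls) (x : ℤ) : ℕ := (F.filter (fun C => x ∈ C)).card

/-- Variable degree. -/
def vdeg (F : Cls) (v : ℤ) : ℕ := ldeg F v + ldeg F (-v)

/-- Singular variable. -/
def SingularVar (F : Cls) (v : ℤ) : Prop :=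
  v ∈ cvar F ∧ min (ldeg F v) (ldeg F (-v)) = 1

/-- Nonsingular clause-set. -/
def Nonsingular (F : Cls) : Prop := ∀ v, ¬ SingularVar F v

/-- Number of singular variables. -/
def nsv (F : Cls) : ℕ :=
  ((cvar F).filter (fun v => min (ldeg F v) (ldeg F (-v)) = 1)).card

/-- Number of 1-singular variables. -/
def nosv (F : Cls) : ℕ :=
  ((cvar F).filter (fun v => min (ldeg F v) (ldeg F (-v)) = 1 ∧ vdeg F v = 2)).card

/-- Number of singular, non-1-singular variables. -/
def nnosv (F : Cls) : ℕ :=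
  ((cvar F).filter (fun v => min (ldeg F v) (ldeg F (-v)) = 1 ∧ vdeg F v ≠ 2)).card

/-- Full subsumption pair: `{E ∪ {x}, E ∪ {-x}}`. -/
def IsFsPair (P : Cls) : Prop :=
  ∃ (E : Finset ℤ) (x : ℤ), IsClause E ∧ x ≠ 0 ∧ x ∉ E ∧ -x ∉ E ∧
    P = {insert x E, insert (-x) E}

/-- Strict fs-resolvability: an fs-pair whose resolvent is not in `F`, and whose
resolution variable occurs in the rest of `F`. -/
def StrictlyFsResolvable (F : Cls) : Prop :=
  ∃ (E : Finset ℤ) (x : ℤ), IsClause E ∧ x ≠ 0 ∧ x ∉ E ∧ -x ∉ E ∧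
    insert x E ∈ F ∧ insert (-x) E ∈ F ∧ E ∉ F ∧
    |x| ∈ cvar (F \ {insert x E, insert (-x) E})

/-- `F'` is an nfs-flip of `F`: an nfs-pair `{E ∪ {x}, E ∪ {-x,y}} ⊆ F` is replaced
by its flipped pair `{E ∪ {x,-y}, E ∪ {y}}`, which must not intersect `F`. -/
def NfsFlip (F F' : Cls) : Prop :=
  ∃ (E : Finset ℤ) (x y : ℤ), IsClause E ∧ x ≠ 0 ∧ y ≠ 0 ∧ |x| ≠ |y| ∧
    x ∉ E ∧ -x ∉ E ∧ y ∉ E ∧ -y ∉ E ∧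
    insert x E ∈ F ∧ insert y (insert (-x) E) ∈ F ∧
    insert (-y) (insert x E) ∉ F ∧ insert y E ∉ F ∧
    F' = (F \ {insert x E, insert y (insert (-x) E)}) ∪
         {insert (-y) (insert x E), insert y E}

/-- Intersection of all clauses of `F` (for nonempty `F`). -/
def bigInter (F : Cls) : Finset ℤ := (F.sup id).filter (fun x => ∀ C ∈ F, x ∈ C)

/-- Clause-factor: a nonempty `F' ⊆ F` whose residue is unsatisfiable. -/
def ClauseFactor (F F' : Cls) : Prop :=
  F'.Nonempty ∧ F' ⊆ F ∧ ¬ Sat (F'.image (fun E => E \ bigInter F'))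

/-- A clause-factor is trivial if it has one clause, or is unsatisfiable and all of `F`. -/
def TrivialFactor (F F' : Cls) : Prop := F'.card = 1 ∨ (¬ Sat F' ∧ F' = F)

/-- Clause-irreducible: every clause-factor is trivial. -/
def ClauseIrreducible (F : Cls) : Prop := ∀ F', ClauseFactor F F' → TrivialFactor F F'

/-- DP-reduction (variable elimination) on variable `v`. -/
def dp (v : ℤ) (F : Cls) : Cls :=
  ((F ×ˢ F).filter (fun p => p.1 ∩ p.2.image (fun x => -x) = {v})).image
    (fun p => (p.1 ∪ p.2) \ {v, -v}) ∪
  F.filter (fun C => v ∉ C ∧ -v ∉ C)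

/-- `x` (or `-x`) occurs in a clause of `F`. -/
def LitIn (F : Cls) (x : ℤ) : Prop := ∃ C ∈ F, x ∈ C ∨ -x ∈ C

/-- Isomorphism of clause-sets. -/
def Iso (F G : Cls) : Prop :=
  ∃ f : ℤ → ℤ, (∀ x, f (-x) = - f x) ∧
    (∀ x y, LitIn F x → LitIn F y → f x = f y → x = y) ∧
    G = F.image (fun C => C.image f)

/-- The clause-set D3. -/
def D3 : Cls := {({1,2,3} : Finset ℤ), {-1,-2,-3}, {-1,2}, {-2,3}, {-3,1}}

/-- Logical equivalence of clause-sets. -/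
def LogEquiv (F G : Cls) : Prop :=
  ∀ S : Finset ℤ, IsClause S →
    ((∀ D ∈ F, (S ∩ D).Nonempty) ↔ (∀ D ∈ G, (S ∩ D).Nonempty))

namespace SDPx

lemma isClause_mono {C D : Finset ℤ} (h : C ⊆ D) (hD : IsClause D) : IsClause C :=
  ⟨fun h0 => hD.1 (h h0), fun x hx hnx => hD.2 x (h hx) (h hnx)⟩

lemma mem_cvar {F : Cls} {C : Finset ℤ} {x : ℤ} (hC : C ∈ F) (hx : x ∈ C) : |x| ∈ cvar F :=
  Finset.mem_sup.2 ⟨C, hC, Finset.mem_image_of_mem _ hx⟩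

lemma exists_of_mem_cvar {F : Cls} {v : ℤ} (h : v ∈ cvar F) :
    ∃ C ∈ F, ∃ x ∈ C, |x| = v := by
  obtain ⟨C, hC, hx⟩ := Finset.mem_sup.1 h
  obtain ⟨x, hxC, rfl⟩ := Finset.mem_image.1 hx
  exact ⟨C, hC, x, hxC, rfl⟩

lemma cvar_pos {F : Cls} (hF : IsClauseSet F) {v : ℤ} (h : v ∈ cvar F) : 0 < v := by
  obtain ⟨C, hC, x, hxC, rfl⟩ := exists_of_mem_cvar h
  have hx0 : x ≠ 0 := fun h0 => (hF C hC).1 (h0 ▸ hxC)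
  exact abs_pos.2 hx0

def Lits (F : Cls) : Finset ℤ := cvar F ∪ (cvar F).image (fun v => -v)

lemma mem_Lits_of {F : Cls} {C : Finset ℤ} {z : ℤ} (hC : C ∈ F) (hz : z ∈ C) :
    z ∈ Lits F := by
  rcases le_or_gt 0 z with h | h
  · exact Finset.mem_union_left _ (abs_of_nonneg h ▸ mem_cvar hC hz)
  · refine Finset.mem_union_right _ (Finset.mem_image.2 ⟨|z|, mem_cvar hC hz, ?_⟩)
    rw [abs_of_neg h]; ring

noncomputable def defect (F : Cls) : ℕ :=
  ((Lits F).filter (fun z => ldeg F z = 1)).card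

def Total (V S : Finset ℤ) : Prop := IsClause S ∧ ∀ v ∈ V, v ∈ S ∨ -v ∈ S

lemma total_decide {V S : Finset ℤ} {z : ℤ} (h : Total V S) (hz : |z| ∈ V) :
    z ∈ S ∨ -z ∈ S := by
  rcases le_or_gt 0 z with h0 | h0
  · rw [abs_of_nonneg h0] at hz; exact h.2 z hz
  · rw [abs_of_neg h0] at hz
    rcases h.2 (-z) hz with hh | hh
    · exact Or.inr hh
    · rw [neg_neg] at hh; exact Or.inl hh

noncomputable def extend (T V : Finset ℤ) : Finset ℤ :=
  T ∪ V.filter (fun v => v ∉ T.image (fun t => |t|))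

lemma subset_extend {T V : Finset ℤ} : T ⊆ extend T V := Finset.subset_union_left

lemma extend_total {T V : Finset ℤ} (hT : IsClause T) (hV : ∀ v ∈ V, 0 < v) :
    Total V (extend T V) := by
  constructor
  · constructor
    · intro h0
      rcases Finset.mem_union.1 h0 with h | h
      · exact hT.1 h
      · exact absurd (hV 0 (Finset.mem_filter.1 h).1) (lt_irrefl 0)
    · intro x hx hnx
      rcases Finset.mem_union.1 hx with h | h <;> rcases Finset.mem_union.1 hnx with h' | h'
      · exact hT.2 x h h'
      · refine (Finset.mem_filter.1 h').2 (Finset.mem_image.2 ⟨x, h, ?_⟩)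
        have hx0 : 0 < -x := hV (-x) (Finset.mem_filter.1 h').1
        exact abs_of_neg (by omega)
      · refine (Finset.mem_filter.1 h).2 (Finset.mem_image.2 ⟨-x, h', ?_⟩)
        have hx0 : 0 < x := hV x (Finset.mem_filter.1 h).1
        rw [abs_neg]; exact abs_of_pos hx0
      · have h1 := hV x (Finset.mem_filter.1 h).1
        have h2 := hV (-x) (Finset.mem_filter.1 h').1
        omega
  · intro v hv
    by_cases hmem : v ∈ T.image (fun t => |t|)
    · obtain ⟨t, htT, ht⟩ := Finset.mem_image.1 hmem
      have h0 : 0 < v := hV v hv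
      rcases abs_cases t with ⟨h1, _⟩ | ⟨h1, _⟩
      · have : t = v := h1.symm.trans ht
        exact Or.inl (subset_extend (this ▸ htT))
      · have h2 : -t = v := h1.symm.trans ht
        have : t = -v := by omega
        exact Or.inr (subset_extend (this ▸ htT))
    · exact Or.inl (Finset.mem_union_right _ (Finset.mem_filter.2 ⟨hv, hmem⟩))

lemma not_mem_extend' {T V : Finset ℤ} (hT : IsClause T) (hV : ∀ v ∈ V, 0 < v)
    {a : ℤ} (ha : -a ∈ T) : a ∉ extend T V := by
  intro hmem
  rcases Finset.mem_union.1 hmem with h | h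
  · exact hT.2 a h ha
  · have h0 : 0 < a := hV a (Finset.mem_filter.1 h).1
    refine (Finset.mem_filter.1 h).2 (Finset.mem_image.2 ⟨-a, ha, ?_⟩)
    rw [abs_neg]; exact abs_of_pos h0

def flip (z : ℤ) (S : Finset ℤ) : Finset ℤ := insert z (S.erase (-z))

lemma mem_flip {z S u} : u ∈ flip z S ↔ u = z ∨ (u ≠ -z ∧ u ∈ S) := by
  simp [flip, Finset.mem_insert, Finset.mem_erase]

lemma flip_clause {S : Finset ℤ} {z : ℤ} (hS : IsClause S) (hz : z ≠ 0) (hzS : z ∉ S) :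
    IsClause (flip z S) := by
  constructor
  · intro h0
    rcases mem_flip.1 h0 with h | ⟨_, h⟩
    · exact hz h.symm
    · exact hS.1 h
  · intro x hx hnx
    rcases mem_flip.1 hx with h | ⟨hne, h⟩ <;> rcases mem_flip.1 hnx with h' | ⟨hne', h'⟩
    · subst h; omega
    · subst h; omega
    · subst h'; omega
    · exact hS.2 x h h'

lemma flip_total {V S : Finset ℤ} {z : ℤ} (h : Total V S) (hz : z ≠ 0) (hzS : z ∉ S) :
    Total V (flip z S) := by
  refine ⟨flip_clause h.1 hz hzS, fun v hv => ?_⟩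
  rcases h.2 v hv with hh | hh
  · by_cases hvz : v = -z
    · exact Or.inr (mem_flip.2 (Or.inl (by omega)))
    · exact Or.inl (mem_flip.2 (Or.inr ⟨hvz, hh⟩))
  · by_cases hvz : -v = -z
    · exact Or.inl (mem_flip.2 (Or.inl (by omega)))
    · exact Or.inr (mem_flip.2 (Or.inr ⟨hvz, hh⟩))

lemma exists_falsified {G : Cls} (hU : UHit G) {S : Finset ℤ} (hS : IsClause S) :
    ∃ W ∈ G, S ∩ W = ∅ := by
  have := hU.2.2
  rw [Sat] at this
  push_neg at this
  obtain ⟨W, hW, hne⟩ := this S hS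
  exact ⟨W, hW, hne⟩

lemma falsified_unique {G : Cls} (hU : UHit G) {S : Finset ℤ} (hT : Total (cvar G) S)
    {W₁ W₂ : Finset ℤ} (h₁ : W₁ ∈ G) (h₂ : W₂ ∈ G)
    (hf₁ : S ∩ W₁ = ∅) (hf₂ : S ∩ W₂ = ∅) : W₁ = W₂ := by
  by_contra hne
  obtain ⟨u, hu, hmu⟩ := hU.2.1 W₁ h₁ W₂ h₂ hne
  rcases total_decide hT (mem_cvar h₁ hu) with h | h
  · exact Finset.notMem_empty u (hf₁ ▸ Finset.mem_inter.2 ⟨h, hu⟩)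
  · exact Finset.notMem_empty (-u) (hf₂ ▸ Finset.mem_inter.2 ⟨h, hmu⟩)

lemma neg_ldeg_pos {G : Cls} (hU : UHit G) {C₀ : Finset ℤ} {z₀ : ℤ}
    (hC₀ : C₀ ∈ G) (hz₀ : z₀ ∈ C₀) : 0 < ldeg G (-z₀) := by
  have hVpos : ∀ v ∈ cvar G, 0 < v := fun v hv => cvar_pos hU.1 hv
  have hclC : IsClause C₀ := hU.1 C₀ hC₀
  have hz0 : z₀ ≠ 0 := fun h => hclC.1 (h ▸ hz₀)
  set T : Finset ℤ := C₀.image (fun t => -t) with hTdef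
  have hT : IsClause T := by
    constructor
    · intro h0
      obtain ⟨t, ht, h⟩ := Finset.mem_image.1 h0
      exact hclC.1 (by simpa [show t = 0 by omega] using ht)
    · intro x hx hnx
      obtain ⟨t, ht, h⟩ := Finset.mem_image.1 hx
      obtain ⟨t', ht', h'⟩ := Finset.mem_image.1 hnx
      exact hclC.2 t' ht' (by rw [show -t' = t by omega]; exact ht)
  set S : Finset ℤ := extend T (cvar G) with hSdef
  have hTot : Total (cvar G) S := extend_total hT hVpos
  have hSC : ∀ c ∈ C₀, c ∉ S := fun c hc =>
    not_mem_extend' hT hVpos (Finset.mem_image.2 ⟨c, hc, rfl⟩)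
  have hmz : -z₀ ∈ S := subset_extend (Finset.mem_image.2 ⟨z₀, hz₀, rfl⟩)
  have hzS : z₀ ∉ S := hSC z₀ hz₀
  set S' : Finset ℤ := flip z₀ S with hS'def
  have hTot' : Total (cvar G) S' := flip_total hTot hz0 hzS
  obtain ⟨W', hW', hf'⟩ := exists_falsified hU hTot'.1
  by_cases hmem : -z₀ ∈ W'
  · rw [ldeg, Finset.card_pos]
    exact ⟨W', Finset.mem_filter.2 ⟨hW', hmem⟩⟩
  · exfalso
    have hSW : S ∩ W' = ∅ := by
      rw [Finset.eq_empty_iff_forall_notMem]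
      intro u hu
      rcases Finset.mem_inter.1 hu with ⟨huS, huW⟩
      have huz : u ≠ -z₀ := fun h => hmem (h ▸ huW)
      have : u ∈ S' := mem_flip.2 (Or.inr ⟨huz, huS⟩)
      exact Finset.notMem_empty u (hf' ▸ Finset.mem_inter.2 ⟨this, huW⟩)
    have hSC₀ : S ∩ C₀ = ∅ := by
      rw [Finset.eq_empty_iff_forall_notMem]
      intro u hu
      rcases Finset.mem_inter.1 hu with ⟨huS, huC⟩
      exact hSC u huC huS
    have hWC : W' = C₀ := falsified_unique hU hTot hW' hC₀ hSW hSC₀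
    have : z₀ ∈ S' := mem_flip.2 (Or.inl rfl)
    exact Finset.notMem_empty z₀ (hf' ▸ Finset.mem_inter.2 ⟨this, hWC ▸ hz₀⟩)

lemma ldeg_pos {G : Cls} (hU : UHit G) {z : ℤ} (h : |z| ∈ cvar G) : 0 < ldeg G z := by
  obtain ⟨C, hC, x, hxC, hx⟩ := exists_of_mem_cvar h
  have : x = z ∨ x = -z := by
    rcases abs_cases x with ⟨h1, _⟩ | ⟨h1, _⟩ <;> rcases abs_cases z with ⟨h2, _⟩ | ⟨h2, _⟩ <;>
      rw [h1] at hx <;> rw [h2] at hx <;> omega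
  rcases this with rfl | h'
  · rw [ldeg, Finset.card_pos]
    exact ⟨C, Finset.mem_filter.2 ⟨hC, hxC⟩⟩
  · have := neg_ldeg_pos hU hC hxC
    rwa [h', neg_neg] at this

lemma flip_lemma {G : Cls} (hU : UHit G) {A B : Finset ℤ} (hA : A ∈ G) (hB : B ∈ G)
    {z₁ z₂ : ℤ} (h1A : z₁ ∈ A) (h1B : z₁ ∈ B) (h2A : z₂ ∈ A) (h2B : z₂ ∈ B)
    (h12 : z₁ ≠ z₂) (h12' : z₁ ≠ -z₂)
    (hocc1 : ∀ W ∈ G, z₁ ∈ W → W = A ∨ W = B)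
    (hocc2 : ∀ W ∈ G, z₂ ∈ W → W = A ∨ W = B) : False := by
  have hVpos : ∀ v ∈ cvar G, 0 < v := fun v hv => cvar_pos hU.1 hv
  have hclA : IsClause A := hU.1 A hA
  have hz10 : z₁ ≠ 0 := fun h => hclA.1 (h ▸ h1A)
  have hz20 : z₂ ≠ 0 := fun h => hclA.1 (h ▸ h2A)
  set T : Finset ℤ := A.image (fun t => -t) with hTdef
  have hT : IsClause T := by
    constructor
    · intro h0
      obtain ⟨t, ht, h⟩ := Finset.mem_image.1 h0
      exact hclA.1 (by simpa [show t = 0 by omega] using ht)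
    · intro x hx hnx
      obtain ⟨t, ht, h⟩ := Finset.mem_image.1 hx
      obtain ⟨t', ht', h'⟩ := Finset.mem_image.1 hnx
      exact hclA.2 t' ht' (by rw [show -t' = t by omega]; exact ht)
  set S : Finset ℤ := extend T (cvar G) with hSdef
  have hTot : Total (cvar G) S := extend_total hT hVpos
  have hSA : ∀ a ∈ A, a ∉ S := fun a ha =>
    not_mem_extend' hT hVpos (Finset.mem_image.2 ⟨a, ha, rfl⟩)
  have hSAe : S ∩ A = ∅ := by
    rw [Finset.eq_empty_iff_forall_notMem]
    intro u hu
    exact hSA u (Finset.mem_inter.1 hu).2 (Finset.mem_inter.1 hu).1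
  have hm1 : -z₁ ∈ S := subset_extend (Finset.mem_image.2 ⟨z₁, h1A, rfl⟩)
  have hm2 : -z₂ ∈ S := subset_extend (Finset.mem_image.2 ⟨z₂, h2A, rfl⟩)
  have h1S : z₁ ∉ S := hSA _ h1A
  have h2S : z₂ ∉ S := hSA _ h2A
  set S₁ : Finset ℤ := flip z₁ S with hS1def
  set S₂ : Finset ℤ := flip z₂ S with hS2def
  have hTot₁ : Total (cvar G) S₁ := flip_total hTot hz10 h1S
  have hTot₂ : Total (cvar G) S₂ := flip_total hTot hz20 h2S
  -- the two falsified clauses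
  have key : ∀ z : ℤ, z ≠ 0 → z ∈ A → z ∉ S →
      ∀ W ∈ G, flip z S ∩ W = ∅ → -z ∈ W := by
    intro z hz0' hzA hzS W hW hf
    by_contra hmem
    have hSW : S ∩ W = ∅ := by
      rw [Finset.eq_empty_iff_forall_notMem]
      intro u hu
      rcases Finset.mem_inter.1 hu with ⟨huS, huW⟩
      have huz : u ≠ -z := fun h => hmem (h ▸ huW)
      have : u ∈ flip z S := mem_flip.2 (Or.inr ⟨huz, huS⟩)
      exact Finset.notMem_empty u (hf ▸ Finset.mem_inter.2 ⟨this, huW⟩)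
    have hWA : W = A := falsified_unique hU hTot hW hA hSW hSAe
    have : z ∈ flip z S := mem_flip.2 (Or.inl rfl)
    exact Finset.notMem_empty z (hf ▸ Finset.mem_inter.2 ⟨this, hWA ▸ hzA⟩)
  obtain ⟨W₁, hW₁, hf₁⟩ := exists_falsified hU hTot₁.1
  obtain ⟨W₂, hW₂, hf₂⟩ := exists_falsified hU hTot₂.1
  have hn1 : -z₁ ∈ W₁ := key z₁ hz10 h1A h1S W₁ hW₁ hf₁
  have hn2 : -z₂ ∈ W₂ := key z₂ hz20 h2A h2S W₂ hW₂ hf₂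
  have hm1S₂ : -z₁ ∈ S₂ := mem_flip.2 (Or.inr ⟨by omega, hm1⟩)
  have h2S₂ : z₂ ∈ S₂ := mem_flip.2 (Or.inl rfl)
  have h1S₁ : z₁ ∈ S₁ := mem_flip.2 (Or.inl rfl)
  have hnotf : ∀ u : ℤ, u ∈ S₁ → u ∈ W₁ → False := by
    intro u h1 h2
    exact Finset.notMem_empty u (hf₁ ▸ Finset.mem_inter.2 ⟨h1, h2⟩)
  have hnotf₂ : ∀ u : ℤ, u ∈ S₂ → u ∈ W₂ → False := by
    intro u h1 h2
    exact Finset.notMem_empty u (hf₂ ▸ Finset.mem_inter.2 ⟨h1, h2⟩)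
  have hneW : W₁ ≠ W₂ := by
    intro h
    exact hnotf₂ (-z₁) hm1S₂ (h ▸ hn1)
  obtain ⟨u, hu, hmu⟩ := hU.2.1 W₁ hW₁ W₂ hW₂ hneW
  have huS₁ : u ∉ S₁ := fun h => hnotf u h hu
  have hmuS₂ : -u ∉ S₂ := fun h => hnotf₂ (-u) h hmu
  by_cases hu1 : u = z₁
  · exact huS₁ (hu1 ▸ h1S₁)
  by_cases hu1' : u = -z₁
  · have : z₁ ∈ W₂ := by rw [show z₁ = -u by omega]; exact hmu
    rcases hocc1 W₂ hW₂ this with h | h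
    · exact hnotf₂ z₂ h2S₂ (h ▸ h2A)
    · exact hnotf₂ z₂ h2S₂ (h ▸ h2B)
  by_cases hu2 : u = z₂
  · rcases hocc2 W₁ hW₁ (hu2 ▸ hu) with h | h
    · exact hnotf z₁ h1S₁ (h ▸ h1A)
    · exact hnotf z₁ h1S₁ (h ▸ h1B)
  by_cases hu2' : u = -z₂
  · have : z₂ ∈ W₂ := by rw [show z₂ = -u by omega]; exact hmu
    rcases hocc2 W₂ hW₂ this with h | h
    · exact hnotf₂ z₂ h2S₂ (h ▸ h2A)
    · exact hnotf₂ z₂ h2S₂ (h ▸ h2B)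
  · have huS : u ∉ S := fun h => huS₁ (mem_flip.2 (Or.inr ⟨hu1', h⟩))
    have hmuS : -u ∉ S := fun h => hmuS₂ (mem_flip.2 (Or.inr ⟨by omega, h⟩))
    rcases total_decide hTot (mem_cvar hW₁ hu) with h | h
    · exact huS h
    · exact hmuS h
lemma dp_step {G : Cls} {v : ℤ} (hU : UHit G) (hs : SingularVar G v) :
    UHit (dp v G) ∧ defect (dp v G) + 1 ≤ defect G := by
  classical
  have hcs := hU.1
  have hv : v ∈ cvar G := hs.1
  have hv0 : 0 < v := cvar_pos hcs hv
  obtain ⟨y, hvy, hy1⟩ : ∃ y, (y = v ∨ y = -v) ∧ ldeg G y = 1 := by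
    by_cases h : ldeg G v = 1
    · exact ⟨v, Or.inl rfl, h⟩
    · refine ⟨-v, Or.inr rfl, ?_⟩
      have := hs.2; omega
  have hy0 : y ≠ 0 := by rcases hvy with rfl | rfl <;> omega
  have habsny : |(-y)| = v := by
    rcases hvy with rfl | rfl
    · rw [abs_neg]; exact abs_of_pos hv0
    · rw [neg_neg]; exact abs_of_pos hv0
  obtain ⟨C, hCeq⟩ := Finset.card_eq_one.1 hy1
  have hCmem : C ∈ G.filter (fun W => y ∈ W) := by
    rw [show G.filter (fun W => y ∈ W) = {C} from hCeq]
    exact Finset.mem_singleton_self C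
  have hCG : C ∈ G := (Finset.mem_filter.1 hCmem).1
  have hyC : y ∈ C := (Finset.mem_filter.1 hCmem).2
  have huniq : ∀ W ∈ G, y ∈ W → W = C := by
    intro W hW hyW
    have : W ∈ ({C} : Cls) := hCeq ▸ Finset.mem_filter.2 ⟨hW, hyW⟩
    exact Finset.mem_singleton.1 this
  have hclC : IsClause C := hcs C hCG
  have hCny : -y ∉ C := hclC.2 y hyC
  set Ds : Cls := G.filter (fun D => -y ∈ D) with hDsdef
  have hkdeg : Ds.card = ldeg G (-y) := rfl
  have hkpos : 0 < Ds.card := hkdeg ▸ ldeg_pos hU (habsny ▸ hv)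
  have hDsG : ∀ D ∈ Ds, D ∈ G := fun D hD => (Finset.mem_filter.1 hD).1
  have hDsy : ∀ D ∈ Ds, -y ∈ D := fun D hD => (Finset.mem_filter.1 hD).2
  have hynotD : ∀ D ∈ Ds, y ∉ D := by
    intro D hD hyD
    exact (hcs D (hDsG D hD)).2 y hyD (hDsy D hD)
  -- KEY STRUCTURE LEMMA : C \ {y} ⊆ D for all D ∈ Ds
  have hRD : ∀ D ∈ Ds, ∀ w ∈ C, w ≠ y → w ∈ D := by
    intro D hDs w hwC hwy
    by_contra hwD
    have hD : D ∈ G := hDsG D hDs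
    have hmyD : -y ∈ D := hDsy D hDs
    have hclD : IsClause D := hcs D hD
    have hw0 : w ≠ 0 := fun h => hclC.1 (h ▸ hwC)
    have hwny : w ≠ -y := fun h => hCny (h ▸ hwC)
    have hVpos : ∀ u ∈ cvar G, 0 < u := fun u hu => cvar_pos hcs hu
    set T : Finset ℤ := insert (-y) (insert w ((D.erase (-y)).image (fun t => -t))) with hTdef
    have hmemT : ∀ u, u ∈ T ↔ (u = -y ∨ u = w ∨ ∃ t ∈ D, t ≠ -y ∧ u = -t) := by
      intro u
      simp only [hTdef, Finset.mem_insert, Finset.mem_image, Finset.mem_erase]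
      constructor
      · rintro (h | h | ⟨t, ⟨ht1, ht2⟩, ht3⟩)
        · exact Or.inl h
        · exact Or.inr (Or.inl h)
        · exact Or.inr (Or.inr ⟨t, ht2, ht1, ht3.symm⟩)
      · rintro (h | h | ⟨t, ht1, ht2, ht3⟩)
        · exact Or.inl h
        · exact Or.inr (Or.inl h)
        · exact Or.inr (Or.inr ⟨t, ⟨ht2, ht1⟩, ht3.symm⟩)
    have hT : IsClause T := by
      constructor
      · intro h0
        rcases (hmemT 0).1 h0 with h | h | ⟨t, ht, htny, hteq⟩
        · omega
        · omega
        · exact hclD.1 (by simpa [show t = 0 by omega] using ht)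
      · intro x hx hnx
        rcases (hmemT x).1 hx with h1 | h1 | ⟨t, ht, htny, hteq⟩ <;>
          rcases (hmemT (-x)).1 hnx with h2 | h2 | ⟨t', ht', htny', hteq'⟩
        · omega
        · omega
        · exact hynotD D hDs (by rw [show y = t' by omega]; exact ht')
        · omega
        · omega
        · exact hwD (by rw [show w = t' by omega]; exact ht')
        · exact htny (by omega)
        · exact hwD (by rw [show w = t by omega]; exact ht)
        · exact hclD.2 t ht (by rw [show -t = t' by omega]; exact ht')
    set Sf : Finset ℤ := extend T (cvar G) with hSfdef
    have hTotf : Total (cvar G) Sf := extend_total hT hVpos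
    have hmySf : -y ∈ Sf := subset_extend ((hmemT (-y)).2 (Or.inl rfl))
    have hwSf : w ∈ Sf := subset_extend ((hmemT w).2 (Or.inr (Or.inl rfl)))
    have hySf : y ∉ Sf := by
      refine not_mem_extend' hT hVpos ?_
      exact (hmemT (-y)).2 (Or.inl rfl)
    set St : Finset ℤ := flip y Sf with hStdef
    have hTott : Total (cvar G) St := flip_total hTotf hy0 hySf
    have hStD : St ∩ D = ∅ := by
      rw [Finset.eq_empty_iff_forall_notMem]
      intro u hu
      rcases Finset.mem_inter.1 hu with ⟨huS, huD⟩
      rcases mem_flip.1 huS with rfl | ⟨huny, huSf⟩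
      · exact hynotD D hDs huD
      · have : -u ∈ Sf := subset_extend ((hmemT (-u)).2 (Or.inr (Or.inr ⟨u, huD, huny, rfl⟩)))
        exact hTotf.1.2 u huSf this
    obtain ⟨W₀, hW₀, hf₀⟩ := exists_falsified hU hTotf.1
    have hnegW₀ : -y ∉ W₀ := fun h =>
      Finset.notMem_empty (-y) (hf₀ ▸ Finset.mem_inter.2 ⟨hmySf, h⟩)
    have hyW₀ : y ∈ W₀ := by
      by_contra hyW
      have hStW : St ∩ W₀ = ∅ := by
        rw [Finset.eq_empty_iff_forall_notMem]
        intro u hu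
        rcases Finset.mem_inter.1 hu with ⟨huS, huW⟩
        rcases mem_flip.1 huS with rfl | ⟨_, huSf⟩
        · exact hyW huW
        · exact Finset.notMem_empty u (hf₀ ▸ Finset.mem_inter.2 ⟨huSf, huW⟩)
      have : W₀ = D := falsified_unique hU hTott hW₀ hD hStW hStD
      exact hnegW₀ (this ▸ hmyD)
    have : W₀ = C := huniq W₀ hW₀ hyW₀
    exact Finset.notMem_empty w (hf₀ ▸ Finset.mem_inter.2 ⟨hwSf, this ▸ hwC⟩)
  -- the dp formula
  set Gfree : Cls := G.filter (fun W => v ∉ W ∧ -v ∉ W) with hGfreedef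
  have hvy_iff : ∀ u : ℤ, (u = v ∨ u = -v) ↔ (u = y ∨ u = -y) := by
    intro u; rcases hvy with rfl | rfl
    · rfl
    · constructor
      · rintro (h | h)
        · exact Or.inr (by omega)
        · exact Or.inl (by omega)
      · rintro (h | h)
        · exact Or.inr (by omega)
        · exact Or.inl (by omega)
  have hmemiff : ∀ D ∈ Ds, ∀ u : ℤ,
      ((u ∈ C ∨ u ∈ D) ∧ ¬(u = v ∨ u = -v)) ↔ (u ≠ -y ∧ u ∈ D) := by
    intro D hD u
    rw [hvy_iff u]
    constructor
    · rintro ⟨hor, hne⟩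
      push_neg at hne
      refine ⟨hne.2, ?_⟩
      rcases hor with h | h
      · exact hRD D hD u h hne.1
      · exact h
    · rintro ⟨hny', huD⟩
      refine ⟨Or.inr huD, ?_⟩
      push_neg
      exact ⟨fun h => hynotD D hD (h ▸ huD), hny'⟩
  have heq1 : ∀ D ∈ Ds, (C ∪ D) \ {v, -v} = D.erase (-y) := by
    intro D hD
    ext u
    simp only [Finset.mem_sdiff, Finset.mem_union, Finset.mem_insert, Finset.mem_singleton,
      Finset.mem_erase]
    exact hmemiff D hD u
  have heq2 : ∀ D ∈ Ds, (D ∪ C) \ {v, -v} = D.erase (-y) := by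
    intro D hD
    ext u
    simp only [Finset.mem_sdiff, Finset.mem_union, Finset.mem_insert, Finset.mem_singleton,
      Finset.mem_erase]
    rw [or_comm]
    exact hmemiff D hD u
  have himg : ((G ×ˢ G).filter (fun p => p.1 ∩ p.2.image (fun x => -x) = {v})).image
      (fun p => (p.1 ∪ p.2) \ {v, -v}) = Ds.image (fun D => D.erase (-y)) := by
    ext Z
    simp only [Finset.mem_image, Finset.mem_filter, Finset.mem_product]
    constructor
    · rintro ⟨⟨P, Q⟩, ⟨⟨hP, hQ⟩, hcond⟩, rfl⟩
      have hvP : v ∈ P := by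
        have : v ∈ P ∩ Q.image (fun x => -x) := hcond ▸ Finset.mem_singleton_self v
        exact (Finset.mem_inter.1 this).1
      have hvQ : -v ∈ Q := by
        have : v ∈ P ∩ Q.image (fun x => -x) := hcond ▸ Finset.mem_singleton_self v
        obtain ⟨q, hq, hq'⟩ := Finset.mem_image.1 (Finset.mem_inter.1 this).2
        rwa [show q = -v by omega] at hq
      rcases hvy with h | h
      · have hPC : P = C := huniq P hP (by rw [h]; exact hvP)
        have hQDs : Q ∈ Ds := Finset.mem_filter.2 ⟨hQ, by rw [show (-y : ℤ) = -v by omega]; exact hvQ⟩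
        exact ⟨Q, hQDs, by rw [hPC]; exact (heq1 Q hQDs).symm⟩
      · have hPDs : P ∈ Ds := Finset.mem_filter.2 ⟨hP, by rw [show (-y : ℤ) = v by omega]; exact hvP⟩
        have hQC : Q = C := huniq Q hQ (by rw [h]; exact hvQ)
        exact ⟨P, hPDs, by rw [hQC]; exact (heq2 P hPDs).symm⟩
    · rintro ⟨D, hD, rfl⟩
      rcases hvy with h | h
      · refine ⟨(C, D), ⟨⟨hCG, hDsG D hD⟩, ?_⟩, heq1 D hD⟩
        ext u
        simp only [Finset.mem_inter, Finset.mem_image, Finset.mem_singleton]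
        constructor
        · rintro ⟨huC, q, hq, hq'⟩
          by_contra huv
          have : u ∈ D := hRD D hD u huC (by omega)
          exact (hcs D (hDsG D hD)).2 u this (by rw [show -u = q by omega]; exact hq)
        · rintro hueq
          exact ⟨by rw [hueq, ← h]; exact hyC, -y, hDsy D hD, by omega⟩
      · refine ⟨(D, C), ⟨⟨hDsG D hD, hCG⟩, ?_⟩, heq2 D hD⟩
        ext u
        simp only [Finset.mem_inter, Finset.mem_image, Finset.mem_singleton]
        constructor
        · rintro ⟨huD, q, hq, hq'⟩
          have hqC : -u ∈ C := by rw [show -u = q by omega]; exact hq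
          by_cases hcase : -u = y
          · omega
          · exact (((hcs D (hDsG D hD)).2 (-u) (hRD D hD (-u) hqC hcase))
              (by simpa using huD)).elim
        · rintro hueq
          exact ⟨by rw [hueq, show v = -y by omega]; exact hDsy D hD, y, hyC, by omega⟩
  have hdp : dp v G = Gfree ∪ Ds.image (fun D => D.erase (-y)) := by
    rw [dp, himg, Finset.union_comm]
  -- clauses of dp contain no y, -y
  have hfreeG : ∀ W ∈ Gfree, W ∈ G := fun W hW => (Finset.mem_filter.1 hW).1
  have hfree_no : ∀ W ∈ Gfree, y ∉ W ∧ -y ∉ W := by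
    intro W hW
    have h := (Finset.mem_filter.1 hW).2
    constructor
    · intro hmem
      rcases hvy with rfl | rfl
      · exact h.1 hmem
      · exact h.2 (by simpa using hmem)
    · intro hmem
      rcases hvy with rfl | rfl
      · exact h.2 hmem
      · exact h.1 (by simpa using hmem)
  have hno : ∀ W ∈ dp v G, y ∉ W ∧ -y ∉ W := by
    intro W hW
    rw [hdp] at hW
    rcases Finset.mem_union.1 hW with h | h
    · exact hfree_no W h
    · obtain ⟨D, hD, rfl⟩ := Finset.mem_image.1 h
      exact ⟨fun hy => hynotD D hD (Finset.mem_of_mem_erase hy),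
        fun hy => (Finset.mem_erase.1 hy).1 rfl⟩
  have hdpsub : ∀ W ∈ dp v G, ∃ W' ∈ G, W ⊆ W' := by
    intro W hW
    rw [hdp] at hW
    rcases Finset.mem_union.1 hW with h | h
    · exact ⟨W, hfreeG W h, Finset.Subset.refl W⟩
    · obtain ⟨D, hD, rfl⟩ := Finset.mem_image.1 h
      exact ⟨D, hDsG D hD, Finset.erase_subset _ _⟩
  have hclset' : IsClauseSet (dp v G) := by
    intro W hW
    obtain ⟨W', hW', hsub⟩ := hdpsub W hW
    exact isClause_mono hsub (hcs W' hW')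
  -- dp is UHIT
  have hU' : UHit (dp v G) := by
    refine ⟨hclset', ?_, ?_⟩
    · -- hitting
      intro W₁ hW₁ W₂ hW₂ hne
      rw [hdp] at hW₁ hW₂
      rcases Finset.mem_union.1 hW₁ with h1 | h1 <;> rcases Finset.mem_union.1 hW₂ with h2 | h2
      · exact hU.2.1 W₁ (hfreeG _ h1) W₂ (hfreeG _ h2) hne
      · obtain ⟨D, hD, rfl⟩ := Finset.mem_image.1 h2
        have hWD : W₁ ≠ D := fun hEq => (hfree_no W₁ h1).2 (hEq.symm ▸ hDsy D hD)
        obtain ⟨u, hu, hmu⟩ := hU.2.1 W₁ (hfreeG _ h1) D (hDsG D hD) hWD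
        refine ⟨u, hu, Finset.mem_erase.2 ⟨?_, hmu⟩⟩
        intro h
        exact (hfree_no W₁ h1).1 (by rw [show y = u by omega]; exact hu)
      · obtain ⟨D, hD, rfl⟩ := Finset.mem_image.1 h1
        have hWD : D ≠ W₂ := fun hEq => (hfree_no W₂ h2).2 (hEq ▸ hDsy D hD)
        obtain ⟨u, hu, hmu⟩ := hU.2.1 D (hDsG D hD) W₂ (hfreeG _ h2) hWD
        have huny : u ≠ -y := by
          intro h
          exact (hfree_no W₂ h2).1 (by rw [show y = -u by omega]; exact hmu)
        exact ⟨u, Finset.mem_erase.2 ⟨huny, hu⟩, hmu⟩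
      · obtain ⟨D₁, hD₁, rfl⟩ := Finset.mem_image.1 h1
        obtain ⟨D₂, hD₂, rfl⟩ := Finset.mem_image.1 h2
        have hDne : D₁ ≠ D₂ := fun h => hne (by rw [h])
        obtain ⟨u, hu, hmu⟩ := hU.2.1 D₁ (hDsG _ hD₁) D₂ (hDsG _ hD₂) hDne
        have h1' : u ≠ -y := by
          intro h
          exact hynotD D₂ hD₂ (by rw [show y = -u by omega]; exact hmu)
        have h2' : -u ≠ -y := by
          intro h
          exact hynotD D₁ hD₁ (by rw [show y = u by omega]; exact hu)
        exact ⟨u, Finset.mem_erase.2 ⟨h1', hu⟩, Finset.mem_erase.2 ⟨h2', hmu⟩⟩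
    · -- unsat
      rintro ⟨S₀, hS₀, hmeet⟩
      set T : Finset ℤ := insert y (S₀.filter (fun u => u ≠ y ∧ u ≠ -y)) with hTdef
      have hmemT : ∀ u, u ∈ T ↔ (u = y ∨ (u ∈ S₀ ∧ u ≠ y ∧ u ≠ -y)) := by
        intro u
        simp only [hTdef, Finset.mem_insert, Finset.mem_filter]
        try tauto
      have hT : IsClause T := by
        constructor
        · intro h0
          rcases (hmemT 0).1 h0 with h | ⟨h, _⟩
          · omega
          · exact hS₀.1 h
        · intro x hx hnx
          rcases (hmemT x).1 hx with h1 | h1 <;>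
            rcases (hmemT (-x)).1 hnx with h2 | h2
          · omega
          · exact h2.2.2 (by omega)
          · exact h1.2.2 (by omega)
          · exact hS₀.2 x h1.1 h2.1
      obtain ⟨W, hW, hf⟩ := exists_falsified hU hT
      have hyW : y ∉ W := fun h =>
        Finset.notMem_empty y (hf ▸ Finset.mem_inter.2 ⟨(hmemT y).2 (Or.inl rfl), h⟩)
      by_cases hmyW : -y ∈ W
      · have hWDs : W ∈ Ds := Finset.mem_filter.2 ⟨hW, hmyW⟩
        have hmem' : W.erase (-y) ∈ dp v G := by
          rw [hdp]
          exact Finset.mem_union_right _ (Finset.mem_image_of_mem _ hWDs)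
        obtain ⟨u, hu⟩ := hmeet _ hmem'
        rcases Finset.mem_inter.1 hu with ⟨huS, huW⟩
        rcases Finset.mem_erase.1 huW with ⟨huny, huW'⟩
        have huy : u ≠ y := fun h => hyW (h ▸ huW')
        exact Finset.notMem_empty u
          (hf ▸ Finset.mem_inter.2 ⟨(hmemT u).2 (Or.inr ⟨huS, huy, huny⟩), huW'⟩)
      · have hWfree : W ∈ Gfree := by
          refine Finset.mem_filter.2 ⟨hW, ?_⟩
          constructor
          · intro h
            rcases (hvy_iff v).1 (Or.inl rfl) with hh | hh
            · exact hyW (hh ▸ h)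
            · exact hmyW (hh ▸ h)
          · intro h
            rcases (hvy_iff (-v)).1 (Or.inr rfl) with hh | hh
            · exact hyW (hh ▸ h)
            · exact hmyW (hh ▸ h)
        have hmem' : W ∈ dp v G := by
          rw [hdp]; exact Finset.mem_union_left _ hWfree
        obtain ⟨u, hu⟩ := hmeet _ hmem'
        rcases Finset.mem_inter.1 hu with ⟨huS, huW⟩
        have huy : u ≠ y := fun h => hyW (h ▸ huW)
        have huny : u ≠ -y := fun h => hmyW (h ▸ huW)
        exact Finset.notMem_empty u
          (hf ▸ Finset.mem_inter.2 ⟨(hmemT u).2 (Or.inr ⟨huS, huy, huny⟩), huW⟩)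
  -- degree formulas
  have hDnotG : ∀ D ∈ Ds, D.erase (-y) ∉ G := by
    intro D hD hmem
    have hne : D.erase (-y) ≠ D := by
      intro h
      exact (Finset.mem_erase.1 (h ▸ hDsy D hD)).1 rfl
    obtain ⟨u, hu, hmu⟩ := hU.2.1 _ hmem D (hDsG D hD) hne
    exact (hcs D (hDsG D hD)).2 u (Finset.mem_of_mem_erase hu) hmu
  have hdisj : Disjoint Gfree (Ds.image (fun D => D.erase (-y))) := by
    rw [Finset.disjoint_left]
    intro W hW hW'
    obtain ⟨D, hD, hDe⟩ := Finset.mem_image.1 hW'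
    exact hDnotG D hD (hDe ▸ hfreeG W hW)
  have hinj : Set.InjOn (fun D : Finset ℤ => D.erase (-y)) ↑Ds := by
    intro D₁ h₁ D₂ h₂ h
    have e₁ : insert (-y) (D₁.erase (-y)) = D₁ := Finset.insert_erase (hDsy D₁ h₁)
    have e₂ : insert (-y) (D₂.erase (-y)) = D₂ := Finset.insert_erase (hDsy D₂ h₂)
    rw [← e₁, ← e₂]
    exact congrArg (insert (-y)) h
  have hldeg' : ∀ z : ℤ, ldeg (dp v G) z =
      (Gfree.filter (fun W => z ∈ W)).card +
      (Ds.filter (fun D => z ∈ D.erase (-y))).card := by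
    intro z
    rw [ldeg, hdp, Finset.filter_union,
      Finset.card_union_of_disjoint (Finset.disjoint_filter_filter hdisj),
      Finset.filter_image, Finset.card_image_of_injOn (hinj.mono (Finset.filter_subset _ _))]
  have hGpart : G = Gfree ∪ Ds ∪ {C} := by
    ext W
    simp only [Finset.mem_union, Finset.mem_singleton]
    constructor
    · intro hW
      by_cases h : v ∉ W ∧ -v ∉ W
      · exact Or.inl (Or.inl (Finset.mem_filter.2 ⟨hW, h⟩))
      · push_neg at h
        by_cases hvW : v ∈ W
        · rcases (hvy_iff v).1 (Or.inl rfl) with hh | hh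
          · exact Or.inr (huniq W hW (hh ▸ hvW))
          · exact Or.inl (Or.inr (Finset.mem_filter.2 ⟨hW, hh ▸ hvW⟩))
        · have hnvW : -v ∈ W := h hvW
          rcases (hvy_iff (-v)).1 (Or.inr rfl) with hh | hh
          · exact Or.inr (huniq W hW (hh ▸ hnvW))
          · exact Or.inl (Or.inr (Finset.mem_filter.2 ⟨hW, hh ▸ hnvW⟩))
    · rintro ((h | h) | rfl)
      · exact hfreeG W h
      · exact hDsG W h
      · exact hCG
  have hdisj2 : Disjoint (Gfree ∪ Ds) ({C} : Cls) := by
    rw [Finset.disjoint_right]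
    intro W hW
    rw [Finset.mem_singleton] at hW
    intro hmem
    rcases Finset.mem_union.1 hmem with h | h
    · exact (hfree_no W h).1 (hW.symm ▸ hyC)
    · exact hCny (hW ▸ hDsy W h)
  have hdisj3 : Disjoint Gfree Ds := by
    rw [Finset.disjoint_left]
    intro W hW hW'
    exact (hfree_no W hW).2 (hDsy W hW')
  have hldegG : ∀ z : ℤ, z ≠ -y → ldeg G z =
      (Gfree.filter (fun W => z ∈ W)).card +
      (Ds.filter (fun D => z ∈ D.erase (-y))).card + (if z ∈ C then 1 else 0) := by
    intro z hzny
    have hfe : Ds.filter (fun D => z ∈ D.erase (-y)) = Ds.filter (fun D => z ∈ D) := by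
      apply Finset.filter_congr
      intro D hD
      simp only [Finset.mem_erase, ne_eq, eq_iff_iff]
      constructor
      · rintro ⟨_, h⟩; exact h
      · intro h; exact ⟨hzny, h⟩
    rw [hfe, ldeg, hGpart, Finset.filter_union,
      Finset.card_union_of_disjoint (Finset.disjoint_filter_filter hdisj2),
      Finset.filter_union,
      Finset.card_union_of_disjoint (Finset.disjoint_filter_filter hdisj3),
      Finset.filter_singleton]
    split_ifs <;> simp
  -- defect inequality
  have hcvar' : cvar (dp v G) ⊆ cvar G := by
    intro w hw
    obtain ⟨W, hW, x, hx, rfl⟩ := exists_of_mem_cvar hw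
    obtain ⟨W', hW', hsub⟩ := hdpsub W hW
    exact mem_cvar hW' (hsub hx)
  have hLits' : Lits (dp v G) ⊆ Lits G := by
    intro z hz
    rcases Finset.mem_union.1 hz with h | h
    · exact Finset.mem_union_left _ (hcvar' h)
    · obtain ⟨w, hw, rfl⟩ := Finset.mem_image.1 h
      exact Finset.mem_union_right _ (Finset.mem_image_of_mem _ (hcvar' hw))
  have hvnot : v ∉ cvar (dp v G) := by
    intro h
    obtain ⟨W, hW, x, hx, hxv⟩ := exists_of_mem_cvar h
    have : x = v ∨ x = -v := by
      rcases abs_cases x with ⟨h1, _⟩ | ⟨h1, _⟩ <;> omega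
    rcases (hvy_iff x).1 this with rfl | rfl
    · exact (hno W hW).1 hx
    · exact (hno W hW).2 hx
  have hzLits : ∀ z ∈ Lits (dp v G), z ≠ y ∧ z ≠ -y := by
    intro z hz
    have hzv : z ≠ v ∧ z ≠ -v := by
      rcases Finset.mem_union.1 hz with h | h
      · have hzpos : 0 < z := cvar_pos hclset' h
        exact ⟨fun hh => hvnot (hh ▸ h), by omega⟩
      · obtain ⟨w, hw, rfl⟩ := Finset.mem_image.1 h
        have hwpos : 0 < w := cvar_pos hclset' hw
        exact ⟨by omega, fun hh => hvnot (by rwa [show w = v by omega] at hw)⟩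
    constructor
    · intro h; rcases hvy with rfl | rfl
      · exact hzv.1 h
      · exact hzv.2 h
    · intro h; rcases hvy with rfl | rfl
      · exact hzv.2 h
      · exact hzv.1 (by omega)
  set L' : Finset ℤ := (Lits (dp v G)).filter (fun z => ldeg (dp v G) z = 1) with hL'def
  set L : Finset ℤ := (Lits G).filter (fun z => ldeg G z = 1) with hLdef
  have hyL : y ∈ L := Finset.mem_filter.2 ⟨mem_Lits_of hCG hyC, hy1⟩
  have hgoal : L'.card + 1 ≤ L.card := by
    by_cases hbad : ∀ z ∈ L', ldeg G z = 1
    · have hsub : insert y L' ⊆ L := by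
        intro z hz
        rcases Finset.mem_insert.1 hz with rfl | hz'
        · exact hyL
        · exact Finset.mem_filter.2
            ⟨hLits' (Finset.mem_filter.1 hz').1, hbad z hz'⟩
      have hyn : y ∉ L' := fun h => (hzLits y (Finset.mem_filter.1 h).1).1 rfl
      calc L'.card + 1 = (insert y L').card := (Finset.card_insert_of_notMem hyn).symm
        _ ≤ L.card := Finset.card_le_card hsub
    · push_neg at hbad
      obtain ⟨z₀, hz₀L', hz₀ne⟩ := hbad
      have hz₀ : z₀ ≠ y ∧ z₀ ≠ -y := hzLits z₀ (Finset.mem_filter.1 hz₀L').1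
      have hz₀d : ldeg (dp v G) z₀ = 1 := (Finset.mem_filter.1 hz₀L').2
      have hz₀C : z₀ ∈ C := by
        by_contra h
        apply hz₀ne
        rw [hldegG z₀ hz₀.2, if_neg h, ← hldeg' z₀, hz₀d]
      have hz₀D : ∀ D ∈ Ds, z₀ ∈ D.erase (-y) := by
        intro D hD
        exact Finset.mem_erase.2 ⟨hz₀.2, hRD D hD z₀ hz₀C hz₀.1⟩
      have hDsfull : Ds.filter (fun D => z₀ ∈ D.erase (-y)) = Ds :=
        Finset.filter_true_of_mem hz₀D
      have hsum : (Gfree.filter (fun W => z₀ ∈ W)).card + Ds.card = 1 := by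
        rw [← hDsfull, ← hldeg' z₀, hz₀d]
      have hk1 : Ds.card = 1 := by omega
      have ha0 : (Gfree.filter (fun W => z₀ ∈ W)).card = 0 := by omega
      obtain ⟨D₁, hDs1⟩ := Finset.card_eq_one.1 hk1
      have hD₁ : D₁ ∈ Ds := hDs1 ▸ Finset.mem_singleton_self D₁
      have hky : ldeg G (-y) = 1 := by rw [← hkdeg, hk1]
      have hmyL : -y ∈ L :=
        Finset.mem_filter.2 ⟨mem_Lits_of (hDsG D₁ hD₁) (hDsy D₁ hD₁), hky⟩
      -- at most one bad literal via flip_lemma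
      have hocc : ∀ z : ℤ, z ∈ C → z ≠ y → (Gfree.filter (fun W => z ∈ W)).card = 0 →
          ∀ W ∈ G, z ∈ W → W = C ∨ W = D₁ := by
        intro z hzC hzy ha W hW hzW
        have hW' : W ∈ Gfree ∪ Ds ∪ {C} := hGpart ▸ hW
        rcases Finset.mem_union.1 hW' with h | h
        · rcases Finset.mem_union.1 h with h | h
          · exfalso
            have : W ∈ Gfree.filter (fun W => z ∈ W) := Finset.mem_filter.2 ⟨h, hzW⟩
            rw [Finset.card_eq_zero] at ha
            exact Finset.notMem_empty W (ha ▸ this)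
          · exact Or.inr (Finset.mem_singleton.1 (hDs1 ▸ h))
        · exact Or.inl (Finset.mem_singleton.1 h)
      have hsub : insert y (insert (-y) (L'.erase z₀)) ⊆ L := by
        intro z hz
        rcases Finset.mem_insert.1 hz with rfl | hz
        · exact hyL
        rcases Finset.mem_insert.1 hz with rfl | hz
        · exact hmyL
        rcases Finset.mem_erase.1 hz with ⟨hzz₀, hzL'⟩
        have hzy' : z ≠ y ∧ z ≠ -y := hzLits z (Finset.mem_filter.1 hzL').1
        have hzd : ldeg (dp v G) z = 1 := (Finset.mem_filter.1 hzL').2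
        refine Finset.mem_filter.2 ⟨hLits' (Finset.mem_filter.1 hzL').1, ?_⟩
        by_cases hzC : z ∈ C
        · exfalso
          have hzD : ∀ D ∈ Ds, z ∈ D.erase (-y) := fun D hD =>
            Finset.mem_erase.2 ⟨hzy'.2, hRD D hD z hzC hzy'.1⟩
          have hDsfull' : Ds.filter (fun D => z ∈ D.erase (-y)) = Ds :=
            Finset.filter_true_of_mem hzD
          have hsum' : (Gfree.filter (fun W => z ∈ W)).card + Ds.card = 1 := by
            rw [← hDsfull', ← hldeg' z, hzd]
          have ha0' : (Gfree.filter (fun W => z ∈ W)).card = 0 := by omega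
          have hzD₁ : z ∈ D₁ := hRD D₁ hD₁ z hzC hzy'.1
          have hz₀D₁ : z₀ ∈ D₁ := hRD D₁ hD₁ z₀ hz₀C hz₀.1
          have hzznegz₀ : z ≠ -z₀ := by
            intro h
            exact hclC.2 z₀ hz₀C (h ▸ hzC)
          exact flip_lemma hU hCG (hDsG D₁ hD₁) hzC hzD₁ hz₀C hz₀D₁ hzz₀ hzznegz₀
            (hocc z hzC hzy'.1 ha0') (hocc z₀ hz₀C hz₀.1 ha0)
        · rw [hldegG z hzy'.2, if_neg hzC, ← hldeg' z, hzd]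
      have hyn : y ∉ insert (-y) (L'.erase z₀) := by
        intro h
        rcases Finset.mem_insert.1 h with h | h
        · omega
        · exact (hzLits y (Finset.mem_filter.1 (Finset.mem_of_mem_erase h)).1).1 rfl
      have hmyn : -y ∉ L'.erase z₀ := fun h =>
        (hzLits (-y) (Finset.mem_filter.1 (Finset.mem_of_mem_erase h)).1).2 rfl
      have hcard : (insert y (insert (-y) (L'.erase z₀))).card = L'.card + 1 := by
        rw [Finset.card_insert_of_notMem hyn, Finset.card_insert_of_notMem hmyn,
          Finset.card_erase_of_mem hz₀L']
        have : 1 ≤ L'.card := Finset.card_pos.2 ⟨z₀, hz₀L'⟩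
        omega
      calc L'.card + 1 = (insert y (insert (-y) (L'.erase z₀))).card := hcard.symm
        _ ≤ L.card := Finset.card_le_card hsub
  exact ⟨hU', hgoal⟩
lemma abs_mem_of_mem_Lits {H : Cls} (hcl : IsClauseSet H) {z : ℤ} (hz : z ∈ Lits H) :
    |z| ∈ cvar H := by
  rcases Finset.mem_union.1 hz with h | h
  · rwa [abs_of_pos (cvar_pos hcl h)]
  · obtain ⟨w, hw, rfl⟩ := Finset.mem_image.1 h
    have := cvar_pos hcl hw
    rwa [abs_of_neg (by omega), neg_neg]

lemma singular_defect_pos {G : Cls} {v : ℤ} (hs : SingularVar G v) : 1 ≤ defect G := by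
  classical
  have hv : v ∈ cvar G := hs.1
  obtain ⟨y, hvy, hy1⟩ : ∃ y, (y = v ∨ y = -v) ∧ ldeg G y = 1 := by
    by_cases h : ldeg G v = 1
    · exact ⟨v, Or.inl rfl, h⟩
    · refine ⟨-v, Or.inr rfl, ?_⟩
      have := hs.2; omega
  have hyL : y ∈ Lits G := by
    rcases hvy with rfl | rfl
    · exact Finset.mem_union_left _ hv
    · exact Finset.mem_union_right _ (Finset.mem_image_of_mem _ hv)
  rw [defect, Nat.succ_le_iff, Finset.card_pos]
  exact ⟨y, Finset.mem_filter.2 ⟨hyL, hy1⟩⟩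

lemma nonsing_two {F : Cls} (hU : UHit F) (hns : Nonsingular F) {z : ℤ}
    (h : |z| ∈ cvar F) : 2 ≤ ldeg F z := by
  have h1 : 1 ≤ ldeg F z := ldeg_pos hU h
  have h2 : 1 ≤ ldeg F (-z) := ldeg_pos hU (by rwa [abs_neg])
  by_contra hlt
  have hz1 : ldeg F z = 1 := by omega
  apply hns |z|
  refine ⟨h, ?_⟩
  rcases abs_cases z with ⟨he, _⟩ | ⟨he, _⟩
  · rw [he]; omega
  · rw [he, neg_neg]; omega

theorem stmt9_core (F : Cls) (hU : UHit F) (hns : Nonsingular F)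
    (E : Finset ℤ) (x : ℤ) (hE : IsClause E) (hx : x ≠ 0) (hxE : x ∉ E) (hxE' : -x ∉ E)
    (h1 : insert x E ∈ F) (h2 : insert (-x) E ∈ F) (hEF : E ∉ F) :
    UHit ((F \ {insert x E, insert (-x) E}) ∪ {E}) ∧
    defect ((F \ {insert x E, insert (-x) E}) ∪ {E}) ≤ 3 := by
  classical
  set A : Finset ℤ := insert x E with hAdef
  set B : Finset ℤ := insert (-x) E with hBdef
  set FD : Cls := F \ {A, B} with hFDdef
  set F' : Cls := FD ∪ {E} with hF'def
  have hcsF := hU.1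
  have hclA : IsClause A := hcsF A h1
  have hclB : IsClause B := hcsF B h2
  have hAB : A ≠ B := by
    intro h
    have : x ∈ B := h ▸ Finset.mem_insert_self x E
    rcases Finset.mem_insert.1 this with h' | h'
    · omega
    · exact hxE h'
  have hxA : x ∈ A := Finset.mem_insert_self x E
  have hxB : -x ∈ B := Finset.mem_insert_self (-x) E
  have hEA : E ⊆ A := Finset.subset_insert x E
  have hEB : E ⊆ B := Finset.subset_insert (-x) E
  have hFDmem : ∀ W, W ∈ FD ↔ (W ∈ F ∧ W ≠ A ∧ W ≠ B) := by
    intro W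
    rw [hFDdef, Finset.mem_sdiff, Finset.mem_insert, Finset.mem_singleton]
    tauto
  have hEFD : E ∉ FD := fun h => hEF ((hFDmem E).1 h).1
  have hF'mem : ∀ W, W ∈ F' ↔ (W ∈ FD ∨ W = E) := by
    intro W
    rw [hF'def, Finset.mem_union, Finset.mem_singleton]
  -- clash of E with any other clause of F
  have hclashE : ∀ D ∈ F, D ≠ A → D ≠ B → (∃ u ∈ E, -u ∈ D) ∧ (∃ u ∈ D, -u ∈ E) := by
    intro D hD hDA hDB
    have hclD : IsClause D := hcsF D hD
    constructor
    · obtain ⟨u, hu, hmu⟩ := hU.2.1 A h1 D hD (fun h => hDA h.symm)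
      rcases Finset.mem_insert.1 hu with rfl | huE
      · obtain ⟨u', hu', hmu'⟩ := hU.2.1 B h2 D hD (fun h => hDB h.symm)
        rcases Finset.mem_insert.1 hu' with rfl | huE'
        · exact absurd hmu' (hclD.2 (-u) hmu)
        · exact ⟨u', huE', hmu'⟩
      · exact ⟨u, huE, hmu⟩
    · obtain ⟨u, hu, hmu⟩ := hU.2.1 D hD A h1 hDA
      rcases Finset.mem_insert.1 hmu with h | hE'
      · obtain ⟨u', hu', hmu'⟩ := hU.2.1 D hD B h2 hDB
        rcases Finset.mem_insert.1 hmu' with h' | hE''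
        · exact absurd (show -u ∈ D by rw [show -u = u' by omega]; exact hu') (hclD.2 u hu)
        · exact ⟨u', hu', hE''⟩
      · exact ⟨u, hu, hE'⟩
  have hU' : UHit F' := by
    refine ⟨?_, ?_, ?_⟩
    · intro W hW
      rcases (hF'mem W).1 hW with h | rfl
      · exact hcsF W ((hFDmem W).1 h).1
      · exact hE
    · intro W₁ hW₁ W₂ hW₂ hne
      rcases (hF'mem W₁).1 hW₁ with hW₁' | rfl <;> rcases (hF'mem W₂).1 hW₂ with hW₂' | hW₂'
      · exact hU.2.1 W₁ ((hFDmem W₁).1 hW₁').1 W₂ ((hFDmem W₂).1 hW₂').1 hne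
      · subst hW₂'
        obtain ⟨⟨u, hu, hmu⟩, _⟩ :=
          hclashE W₁ ((hFDmem W₁).1 hW₁').1 ((hFDmem W₁).1 hW₁').2.1 ((hFDmem W₁).1 hW₁').2.2
        exact ⟨-u, hmu, by rwa [neg_neg]⟩
      · obtain ⟨⟨u, hu, hmu⟩, _⟩ :=
          hclashE W₂ ((hFDmem W₂).1 hW₂').1 ((hFDmem W₂).1 hW₂').2.1 ((hFDmem W₂).1 hW₂').2.2
        exact ⟨u, hu, hmu⟩
      · subst hW₂'; exact absurd rfl hne
    · rintro ⟨S, hS, hmeet⟩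
      apply hU.2.2
      refine ⟨S, hS, fun D hD => ?_⟩
      by_cases hDA : D = A
      · obtain ⟨u, hu⟩ := hmeet E ((hF'mem E).2 (Or.inr rfl))
        exact ⟨u, Finset.mem_inter.2 ⟨(Finset.mem_inter.1 hu).1,
          hDA ▸ hEA (Finset.mem_inter.1 hu).2⟩⟩
      by_cases hDB : D = B
      · obtain ⟨u, hu⟩ := hmeet E ((hF'mem E).2 (Or.inr rfl))
        exact ⟨u, Finset.mem_inter.2 ⟨(Finset.mem_inter.1 hu).1,
          hDB ▸ hEB (Finset.mem_inter.1 hu).2⟩⟩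
      · exact hmeet D ((hF'mem D).2 (Or.inl ((hFDmem D).2 ⟨hD, hDA, hDB⟩)))
  -- degree formulas
  have hdisjE : Disjoint FD ({E} : Cls) := by
    rw [Finset.disjoint_right]
    intro W hW
    rw [Finset.mem_singleton] at hW
    subst hW
    exact hEFD
  have hABsub : ({A, B} : Cls) ⊆ F := by
    intro W hW
    rcases Finset.mem_insert.1 hW with rfl | hW'
    · exact h1
    · exact (Finset.mem_singleton.1 hW') ▸ h2
  have hFeq : FD ∪ {A, B} = F := Finset.sdiff_union_of_subset hABsub
  have hdisjAB : Disjoint FD ({A, B} : Cls) := Finset.sdiff_disjoint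
  have hldegF' : ∀ z : ℤ, ldeg F' z =
      (FD.filter (fun W => z ∈ W)).card + (if z ∈ E then 1 else 0) := by
    intro z
    rw [ldeg, hF'def, Finset.filter_union,
      Finset.card_union_of_disjoint (Finset.disjoint_filter_filter hdisjE),
      Finset.filter_singleton]
    split_ifs <;> simp
  have hldegF : ∀ z : ℤ, ldeg F z =
      (FD.filter (fun W => z ∈ W)).card +
      ((if z ∈ A then 1 else 0) + (if z ∈ B then 1 else 0)) := by
    intro z
    rw [ldeg, ← hFeq, Finset.filter_union,
      Finset.card_union_of_disjoint (Finset.disjoint_filter_filter hdisjAB)]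
    congr 1
    have hins : ({A, B} : Cls) = insert A {B} := rfl
    rw [hins, Finset.filter_insert, Finset.filter_singleton]
    split_ifs with hzA hzB hzB
    · rw [Finset.card_insert_of_notMem (by simp [hAB]), Finset.card_singleton]
    · simp
    · simp
    · simp
  -- at most one E-literal of F-degree 2
  set EZ : Finset ℤ := E.filter (fun z => ldeg F z = 2) with hEZdef
  have hEZ1 : EZ.card ≤ 1 := by
    rw [Finset.card_le_one]
    intro z₁ hz₁ z₂ hz₂
    by_contra hne
    have hz₁E : z₁ ∈ E := (Finset.mem_filter.1 hz₁).1
    have hz₂E : z₂ ∈ E := (Finset.mem_filter.1 hz₂).1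
    have hocc : ∀ z : ℤ, z ∈ E → ldeg F z = 2 → ∀ W ∈ F, z ∈ W → W = A ∨ W = B := by
      intro z hzE hz2 W hW hzW
      have hsub : ({A, B} : Cls) ⊆ F.filter (fun W => z ∈ W) := by
        intro Y hY
        rcases Finset.mem_insert.1 hY with rfl | hY'
        · exact Finset.mem_filter.2 ⟨h1, hEA hzE⟩
        · rw [Finset.mem_singleton.1 hY']
          exact Finset.mem_filter.2 ⟨h2, hEB hzE⟩
      have hcard2 : ({A, B} : Cls).card = 2 := by
        rw [Finset.card_insert_of_notMem (by simp [hAB]), Finset.card_singleton]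
      have heq : ({A, B} : Cls) = F.filter (fun W => z ∈ W) := by
        apply Finset.eq_of_subset_of_card_le hsub
        rw [show (F.filter (fun W => z ∈ W)).card = ldeg F z from rfl, hz2, hcard2]
      have : W ∈ ({A, B} : Cls) := heq ▸ Finset.mem_filter.2 ⟨hW, hzW⟩
      rcases Finset.mem_insert.1 this with h | h
      · exact Or.inl h
      · exact Or.inr (Finset.mem_singleton.1 h)
    have h12' : z₁ ≠ -z₂ := by
      intro h
      exact hE.2 z₂ hz₂E (h ▸ hz₁E)
    exact flip_lemma hU h1 h2 (hEA hz₁E) (hEB hz₁E) (hEA hz₂E) (hEB hz₂E) hne h12'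
      (hocc z₁ hz₁E (Finset.mem_filter.1 hz₁).2) (hocc z₂ hz₂E (Finset.mem_filter.1 hz₂).2)
  -- Lits F' ⊆ Lits F
  have hcvarsub : cvar F' ⊆ cvar F := by
    intro w hw
    obtain ⟨W, hW, u, hu, rfl⟩ := exists_of_mem_cvar hw
    rcases (hF'mem W).1 hW with h | rfl
    · exact mem_cvar ((hFDmem W).1 h).1 hu
    · exact mem_cvar h1 (hEA hu)
  have hsub3 : (Lits F').filter (fun z => ldeg F' z = 1) ⊆ insert x (insert (-x) EZ) := by
    intro z hz
    rcases Finset.mem_filter.1 hz with ⟨hzL, hz1⟩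
    have habs : |z| ∈ cvar F := hcvarsub (abs_mem_of_mem_Lits hU'.1 hzL)
    have h2z : 2 ≤ ldeg F z := nonsing_two hU hns habs
    by_cases hzE : z ∈ E
    · have hzA : z ∈ A := hEA hzE
      have hzB : z ∈ B := hEB hzE
      have e1 := hldegF' z
      have e2 := hldegF z
      rw [if_pos hzE] at e1
      rw [if_pos hzA, if_pos hzB] at e2
      refine Finset.mem_insert.2 (Or.inr (Finset.mem_insert.2 (Or.inr ?_)))
      exact Finset.mem_filter.2 ⟨hzE, by omega⟩
    · by_cases hzx : z = x
      · exact Finset.mem_insert.2 (Or.inl hzx)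
      by_cases hznx : z = -x
      · exact Finset.mem_insert.2 (Or.inr (Finset.mem_insert.2 (Or.inl hznx)))
      · exfalso
        have hzA : z ∉ A := by
          intro h
          rcases Finset.mem_insert.1 h with h' | h'
          · exact hzx h'
          · exact hzE h'
        have hzB : z ∉ B := by
          intro h
          rcases Finset.mem_insert.1 h with h' | h'
          · exact hznx h'
          · exact hzE h'
        have e1 := hldegF' z
        have e2 := hldegF z
        rw [if_neg hzE] at e1
        rw [if_neg hzA, if_neg hzB] at e2
        omega
  have hdef3 : defect F' ≤ 3 := by
    calc defect F' ≤ (insert x (insert (-x) EZ)).card := Finset.card_le_card hsub3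
      _ ≤ (insert (-x) EZ).card + 1 := Finset.card_insert_le _ _
      _ ≤ EZ.card + 1 + 1 := by
          have := Finset.card_insert_le (-x) EZ
          omega
      _ ≤ 3 := by omega
  exact ⟨hU', hdef3⟩

end SDPx

/-- fs-resolution on a nonsingular UHIT yields a UHIT from which every singular
DP-sequence ending nonsingularly has length at most 3. -/
theorem stmt9 (F : Cls) (hU : UHit F) (hns : Nonsingular F)
    (E : Finset ℤ) (x : ℤ) (hE : IsClause E) (hx : x ≠ 0) (hxE : x ∉ E) (hxE' : -x ∉ E)
    (h1 : insert x E ∈ F) (h2 : insert (-x) E ∈ F) (hEF : E ∉ F) :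
    UHit ((F \ {insert x E, insert (-x) E}) ∪ {E}) ∧
    ∀ (m : ℕ) (Fs : ℕ → Cls), Fs 0 = (F \ {insert x E, insert (-x) E}) ∪ {E} →
      (∀ i < m, ∃ v, SingularVar (Fs i) v ∧ Fs (i + 1) = dp v (Fs i)) →
      Nonsingular (Fs m) → m ≤ 3 := by
  obtain ⟨hU', hdef3⟩ := SDPx.stmt9_core F hU hns E x hE hx hxE hxE' h1 h2 hEF
  refine ⟨hU', ?_⟩
  intro m Fs h0 hstep _hns
  by_contra hm
  push_neg at hm
  have key : ∀ i, i ≤ 3 → UHit (Fs i) ∧ SDPx.defect (Fs i) + i ≤ 3 := by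
    intro i
    induction i with
    | zero => intro _; rw [h0]; exact ⟨hU', by simpa using hdef3⟩
    | succ n ih =>
      intro hn
      obtain ⟨hUn, hdn⟩ := ih (by omega)
      have hnm : n < m := by omega
      obtain ⟨v, hsv, heq⟩ := hstep n hnm
      have hd := SDPx.dp_step hUn hsv
      rw [heq]
      exact ⟨hd.1, by omega⟩
  obtain ⟨hU3, hd3⟩ := key 3 le_rfl
  obtain ⟨v, hsv, _⟩ := hstep 3 (by omega)
  have := SDPx.singular_defect_pos hsv
  omega
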